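/- In the Warden's Game on S ⊆ T(n,k) (closed under rotations) with goal α, if γa₁, γa₂ ∈ S with a₁ < a₂, then r(γa₁) ≤ r(γa₂), where r is the remoteness function (number of moves to α under optimal play, ∞ if the warden can avoid α forever). -/
import Mathlib


namespace UCG

abbrev Str (n k : ℕ) := Fin n → Fin k

def OneUp {n k : ℕ} (β γ : Str n k) : Prop :=
  ∃ i : Fin n, β i < γ i ∧ ∀ j : Fin n, j ≠ i → β j = γ j

def IncrTo {n k : ℕ} (S : Set (Str n k)) (β α : Str n k) : Prop :=
  β ∈ S ∧ Relation.ReflTransGen (fun x y => OneUp x y ∧ y ∈ S) β α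

def IsRotation {n k : ℕ} (β γ : Str n k) : Prop :=
  ∃ j : ℕ, ∀ i : Fin n, γ i = β ⟨(i.val + j) % n, Nat.mod_lt _ i.pos⟩

def ClosedUnderRot {n k : ℕ} (S : Set (Str n k)) : Prop :=
  ∀ β ∈ S, ∀ γ, IsRotation β γ → γ ∈ S

def shift {n k : ℕ} (c : Fin k) (β : Str n k) : Str n k :=
  fun i => if i.val = 0 then c else β ⟨i.val - 1, lt_of_le_of_lt (Nat.sub_le _ _) i.isLt⟩

def lastSym {n k : ℕ} (hn : 0 < n) (β : Str n k) : Fin k :=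
  β ⟨n - 1, Nat.sub_lt hn one_pos⟩

/-- `WinIn hn S tgt β m`: in the Warden's Game with legal positions `S`, starting
from position `β`, the prisoner can force the position `tgt` to be reached within
at most `m` moves, whatever the warden does.  A move from `β = γb` is either a
warden move to `cγ ∈ S` with `c < b`, or (if the warden passes) a prisoner move
to `cγ ∈ S` with `c ≥ b`. -/
inductive WinIn {n k : ℕ} (hn : 0 < n) (S : Set (Str n k)) (tgt : Str n k) :
    Str n k → ℕ → Prop
  | passWin (β : Str n k) (m : ℕ) (c : Fin k)
      (hc : lastSym hn β ≤ c) (hcS : shift c β ∈ S) (heq : shift c β = tgt)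
      (hW : ∀ c' : Fin k, c' < lastSym hn β → shift c' β ∈ S → shift c' β ≠ tgt →
        WinIn hn S tgt (shift c' β) m) :
      WinIn hn S tgt β (m + 1)
  | passStep (β : Str n k) (m : ℕ) (c : Fin k)
      (hc : lastSym hn β ≤ c) (hcS : shift c β ∈ S)
      (hwin : WinIn hn S tgt (shift c β) m)
      (hW : ∀ c' : Fin k, c' < lastSym hn β → shift c' β ∈ S → shift c' β ≠ tgt →
        WinIn hn S tgt (shift c' β) m) :
      WinIn hn S tgt β (m + 1)

noncomputable def remoteness {n k : ℕ} (hn : 0 < n) (S : Set (Str n k))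
    (tgt β : Str n k) : ℕ∞ :=
  sInf {e : ℕ∞ | ∃ t : ℕ, e = t ∧ WinIn hn S tgt β t}

def fshift {n k : ℕ} (b : Fin k) (β : Str n k) : Str n k :=
  fun i => if h : i.val = n - 1 then b else β ⟨i.val + 1, by have := i.isLt; omega⟩

def GreedyOk {n k : ℕ} (S : Set (Str n k)) (B : ℕ → Option (Str n k)) (m : ℕ)
    (β : Str n k) (b : Fin k) : Prop :=
  fshift b β ∈ S ∧ ∀ i : ℕ, 1 ≤ i → i ≤ m → B i ≠ some (fshift b β)

def IsGreedy {n k : ℕ} (S : Set (Str n k)) (α : Str n k)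
    (B : ℕ → Option (Str n k)) : Prop :=
  B 0 = some α ∧
  (∀ m : ℕ, B m = none → B (m + 1) = none) ∧
  ∀ m : ℕ, ∀ β : Str n k, B m = some β →
    ((1 ≤ m ∧ β = α) → B (m + 1) = none) ∧
    ((m = 0 ∨ β ≠ α) →
      ((¬ ∃ b : Fin k, GreedyOk S B m β b) → B (m + 1) = none) ∧
      (∀ b : Fin k, GreedyOk S B m β b → (∀ b' : Fin k, b' < b → ¬ GreedyOk S B m β b') →
        B (m + 1) = some (fshift b β)))

def CycSubstr {m n k : ℕ} (hn : 0 < n) (γ : Str m k) (β : Str n k) : Prop :=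
  ∃ j : ℕ, ∀ i : Fin m, β ⟨(j + i.val) % n, Nat.mod_lt _ hn⟩ = γ i

/-- if `γa₁, γa₂ ∈ S` with `a₁ < a₂`, then `r(γa₁) ≤ r(γa₂)`. -/
theorem remoteness_mono_last {n k : ℕ} (hn : 0 < n) (S : Set (Str n k))
    (hS : ClosedUnderRot S) (α : Str n k) (hα : α ∈ S)
    (β₁ β₂ : Str n k) (hβ₁ : β₁ ∈ S) (hβ₂ : β₂ ∈ S)
    (hagree : ∀ i : Fin n, i.val ≠ n - 1 → β₁ i = β₂ i)
    (hlt : lastSym hn β₁ < lastSym hn β₂) :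
    remoteness hn S α β₁ ≤ remoteness hn S α β₂ := by
  have hshift : ∀ c : Fin k, shift c β₁ = shift c β₂ := by
    intro c
    funext i
    unfold shift
    by_cases h : i.val = 0
    · simp [h]
    · simp only [h, if_false]
      apply hagree
      show i.val - 1 ≠ n - 1
      have h2 : i.val < n := i.isLt
      omega
  have hwin : ∀ t, WinIn hn S α β₂ t → WinIn hn S α β₁ t := by
    intro t h
    cases h with
    | passWin β m c hc hcS heq hW =>
        refine WinIn.passWin _ m c (le_of_lt (lt_of_lt_of_le hlt hc)) ?_ ?_ ?_
        · rw [hshift]; exact hcS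
        · rw [hshift]; exact heq
        · intro c' hc' hS' hne
          rw [hshift] at hS' hne ⊢
          exact hW c' (lt_trans hc' hlt) hS' hne
    | passStep β m c hc hcS hw hW =>
        refine WinIn.passStep _ m c (le_of_lt (lt_of_lt_of_le hlt hc)) ?_ ?_ ?_
        · rw [hshift]; exact hcS
        · rw [hshift]; exact hw
        · intro c' hc' hS' hne
          rw [hshift] at hS' hne ⊢
          exact hW c' (lt_trans hc' hlt) hS' hne
  apply sInf_le_sInf
  rintro e ⟨t, rfl, hw⟩
  exact ⟨t, rfl, hwin t hw⟩

end UCG
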